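/- For all real numbers a, b, one has 108·(a² + ab + 7b²)⁶ ≤ max(4·|A₇(a,b)|³, 27·|B₇(a,b)|²), where A₇(a,b) = -3(a²+ab+7b²)(a²-231ab+735b²) and B₇(a,b) = 2(a²+ab+7b²)(a⁴+518a³b-11025a²b²+6174ab³-64827b⁴). -/
import Mathlib

lemma aux_pos7 (a b : ℝ)
    (h1 : 0 < 232*a*b - 728*b^2)
    (h2 : 0 < 2*a^2 - 230*a*b + 742*b^2)
    (h3 : 0 ≤ a^4 + 518*a^3*b - 11025*a^2*b^2 + 6174*a*b^3 - 64827*b^4) :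
    (a^2 + a*b + 7*b^2)^2 ≤ a^4 + 518*a^3*b - 11025*a^2*b^2 + 6174*a*b^3 - 64827*b^4 := by
  nlinarith [mul_pos h1 h2, sq_nonneg (a-21*b), sq_nonneg (a-111*b), sq_nonneg b, sq_nonneg a,
    mul_nonneg h3 (sq_nonneg b), mul_pos h1 h1, mul_pos h2 h2, sq_nonneg (a*b), sq_nonneg (a-3*b)]

lemma aux_neg7 (a b : ℝ)
    (h1 : 0 < 232*a*b - 728*b^2)
    (h2 : 0 < 2*a^2 - 230*a*b + 742*b^2)
    (h3 : a^4 + 518*a^3*b - 11025*a^2*b^2 + 6174*a*b^3 - 64827*b^4 ≤ 0) :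
    (a^2 + a*b + 7*b^2)^2 ≤ -(a^4 + 518*a^3*b - 11025*a^2*b^2 + 6174*a*b^3 - 64827*b^4) := by
  nlinarith [mul_pos h1 h2, sq_nonneg (a-3*b), sq_nonneg (a-4*b), sq_nonneg b, sq_nonneg (a*b),
    mul_pos h1 h1, mul_pos h2 h2, mul_nonneg (neg_nonneg.2 h3) (sq_nonneg b)]

/-- For all real `a, b`: `108·C₇(a,b)⁶ ≤ max(4|A₇(a,b)|³, 27|B₇(a,b)|²)`,
where `C₇ = a²+ab+7b²`, `A₇ = -3·C₇·(a²-231ab+735b²)`, and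
`B₇ = 2·C₇·(a⁴+518a³b-11025a²b²+6174ab³-64827b⁴)`. -/
theorem stmt_8 (a b : ℝ) :
    108 * (a ^ 2 + a * b + 7 * b ^ 2) ^ 6 ≤
      max (4 * |(-3 : ℝ) * (a ^ 2 + a * b + 7 * b ^ 2) *
              (a ^ 2 - 231 * a * b + 735 * b ^ 2)| ^ 3)
          (27 * |(2 : ℝ) * (a ^ 2 + a * b + 7 * b ^ 2) *
              (a ^ 4 + 518 * a ^ 3 * b - 11025 * a ^ 2 * b ^ 2
                + 6174 * a * b ^ 3 - 64827 * b ^ 4)| ^ 2) := by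
  set C : ℝ := a ^ 2 + a * b + 7 * b ^ 2 with hCdef
  set q : ℝ := a ^ 2 - 231 * a * b + 735 * b ^ 2 with hqdef
  set p : ℝ := a ^ 4 + 518 * a ^ 3 * b - 11025 * a ^ 2 * b ^ 2
      + 6174 * a * b ^ 3 - 64827 * b ^ 4 with hpdef
  have hC : 0 ≤ C := by nlinarith [sq_nonneg (2*a + b), sq_nonneg b]
  rcases le_or_gt C |q| with h | h
  · refine le_trans ?_ (le_max_left _ _)
    rw [abs_mul, abs_mul, abs_of_nonneg hC, show |(-3 : ℝ)| = 3 by norm_num]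
    have h3 : C ^ 3 ≤ |q| ^ 3 := pow_le_pow_left₀ hC h 3
    nlinarith [mul_le_mul_of_nonneg_left h3 (pow_nonneg hC 3), pow_nonneg hC 3,
      pow_nonneg (abs_nonneg q) 3]
  · refine le_trans ?_ (le_max_right _ _)
    rw [abs_mul, abs_mul, abs_of_nonneg hC, show |(2 : ℝ)| = 2 by norm_num]
    obtain ⟨hl, hr⟩ := abs_lt.mp h
    have h1 : 0 < 232*a*b - 728*b^2 := by
      have := hr; rw [hCdef, hqdef] at this; nlinarith
    have h2 : 0 < 2*a^2 - 230*a*b + 742*b^2 := by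
      have := hl; rw [hCdef, hqdef] at this; nlinarith
    have hcp : C ^ 2 ≤ |p| := by
      rcases le_or_gt 0 p with hp0 | hp0
      · rw [abs_of_nonneg hp0, hCdef, hpdef]
        have := aux_pos7 a b h1 h2 (by rw [hpdef] at hp0; linarith)
        linarith [this]
      · rw [abs_of_neg hp0, hCdef, hpdef]
        have := aux_neg7 a b h1 h2 (by rw [hpdef] at hp0; linarith)
        linarith [this]
    have h4 : C ^ 4 ≤ |p| ^ 2 := by
      calc C ^ 4 = (C ^ 2) ^ 2 := by ring
        _ ≤ |p| ^ 2 := pow_le_pow_left₀ (sq_nonneg C) hcp 2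
    nlinarith [mul_le_mul_of_nonneg_left h4 (sq_nonneg C), sq_nonneg C, sq_nonneg |p|]
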